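/- For every n ≥ 4 there exist two distinct monomial orders <_τ and <_{τ'} on ℕ^n whose induced orderings agree for every i: for each 1 ≤ i ≤ n, the restrictions of <_τ and <_{τ'} to {α ∈ ℕ^n : α_i = 0} coincide. -/

import Mathlib

open Matrix BigOperators

/-- Lexicographic order on `Fin n → α`: `a < b` iff at the first index where they
differ, `a` is smaller (equivalently, the leftmost nonzero entry of `b - a` is positive). -/
def lexLt {n : ℕ} {α : Type*} [LinearOrder α] (a b : Fin n → α) : Prop :=
  ∃ i : Fin n, a i < b i ∧ ∀ j : Fin n, j < i → a j = b j

/-- A monomial order on `ℕ^n`: a (strict) total order with `0` minimal,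
compatible with addition. -/
def IsMonomialOrder {n : ℕ} (r : (Fin n → ℕ) → (Fin n → ℕ) → Prop) : Prop :=
  IsStrictTotalOrder (Fin n → ℕ) r ∧
  (∀ a : Fin n → ℕ, a ≠ 0 → r 0 a) ∧
  (∀ a b c : Fin n → ℕ, r a b → r (a + c) (b + c))

/-- Graded lexicographic order on `ℕ^n`. -/
def degLexLt {n : ℕ} (a b : Fin n → ℕ) : Prop :=
  (∑ i, a i) < (∑ i, b i) ∨ ((∑ i, a i) = (∑ i, b i) ∧ lexLt a b)

/-- Reverse lexicographic order on `ℕ^n`: compare degrees first; for equal degrees,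
`a < b` iff the rightmost nonzero entry of `b - a` is negative. -/
def revLexLt {n : ℕ} (a b : Fin n → ℕ) : Prop :=
  (∑ i, a i) < (∑ i, b i) ∨
  ((∑ i, a i) = (∑ i, b i) ∧ ∃ i : Fin n, b i < a i ∧ ∀ j : Fin n, i < j → a j = b j)

section LexLemmas

variable {n : ℕ} {α : Type*} [LinearOrder α]

theorem lexLt_irrefl' (a : Fin n → α) : ¬ lexLt a a := by
  rintro ⟨i, hi, -⟩; exact lt_irrefl _ hi

theorem lexLt_trans' {a b c : Fin n → α} (h1 : lexLt a b) (h2 : lexLt b c) : lexLt a c := by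
  obtain ⟨i, hi, hpre⟩ := h1
  obtain ⟨i', hi', hpre'⟩ := h2
  rcases lt_trichotomy i i' with h | h | h
  · exact ⟨i, (hpre' i h) ▸ hi, fun j hj => (hpre j hj).trans (hpre' j (hj.trans h))⟩
  · subst h
    exact ⟨i, hi.trans hi', fun j hj => (hpre j hj).trans (hpre' j hj)⟩
  · refine ⟨i', ?_, fun j hj => (hpre j (hj.trans h)).trans (hpre' j hj)⟩
    have := hpre i' h
    exact this ▸ hi'

theorem lexLt_trichot' {a b : Fin n → α} (h : a ≠ b) : lexLt a b ∨ lexLt b a := by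
  have hne : (Finset.univ.filter fun i => a i ≠ b i).Nonempty := by
    obtain ⟨i, hi⟩ := Function.ne_iff.mp h
    exact ⟨i, by simp [hi]⟩
  set T := Finset.univ.filter fun i => a i ≠ b i with hT
  have hiT : T.min' hne ∈ T := Finset.min'_mem _ _
  set i := T.min' hne
  have hmin : ∀ j, j < i → a j = b j := by
    intro j hj
    by_contra hne'
    exact absurd (Finset.min'_le T j (by simp [hT, hne'])) (not_le.mpr hj)
  have hab : a i ≠ b i := by simpa [hT] using hiT
  rcases lt_or_gt_of_ne hab with h' | h'
  · exact Or.inl ⟨i, h', hmin⟩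
  · exact Or.inr ⟨i, h', fun j hj => (hmin j hj).symm⟩

theorem lexLt_add {a b c : Fin n → ℤ} (h : lexLt a b) : lexLt (a + c) (b + c) := by
  obtain ⟨i, hi, hpre⟩ := h
  exact ⟨i, by simp only [Pi.add_apply]; linarith, fun j hj => by simp [hpre j hj]⟩

end LexLemmas

/-- The auxiliary linear map: row `0` is the total degree, rows `1 ≤ k ≤ n - 2` are the
consecutive differences `a k - a (k+1)`, and the last row is `ε * a 0`. -/
def Ff (n : ℕ) (ε : ℤ) (a : Fin n → ℕ) : Fin n → ℤ := fun k =>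
  if (k : ℕ) = 0 then ∑ i, (a i : ℤ)
  else if h : (k : ℕ) + 1 < n then (a k : ℤ) - (a ⟨(k : ℕ) + 1, h⟩ : ℤ)
  else ε * (a ⟨0, k.pos⟩ : ℤ)

theorem Ff_add {n : ℕ} (ε : ℤ) (a c : Fin n → ℕ) :
    Ff n ε (a + c) = Ff n ε a + Ff n ε c := by
  funext k
  simp only [Ff, Pi.add_apply]
  split_ifs with h1 h2
  · push_cast; rw [Finset.sum_add_distrib]
  · push_cast; ring
  · push_cast; ring

theorem Ff_indep {n : ℕ} (ε ε' : ℤ) (a : Fin n → ℕ) (k : Fin n) (hk : (k : ℕ) + 1 < n) :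
    Ff n ε a k = Ff n ε' a k := by
  simp only [Ff]
  split_ifs <;> rfl

/-- Core injectivity: if all rows except the last agree and `a`, `b` agree at one
coordinate, then `a = b`. -/
theorem Ff_core {n : ℕ} (hn : 4 ≤ n) {ε ε' : ℤ} {a b : Fin n → ℕ}
    (hrow : ∀ k : Fin n, (k : ℕ) + 1 < n → Ff n ε a k = Ff n ε' b k)
    (j : Fin n) (hj : a j = b j) : a = b := by
  have hn0 : 0 < n := by omega
  have hn1 : 1 < n := by omega
  set d : Fin n → ℤ := fun k => (a k : ℤ) - b k with hd
  -- total degrees agree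
  have hsum : ∑ k, d k = 0 := by
    have h0 := hrow ⟨0, hn0⟩ (by simpa using hn1)
    simp only [Ff, Fin.val_mk] at h0
    norm_num at h0
    simp only [hd]
    rw [Finset.sum_sub_distrib, h0]
    ring
  -- consecutive differences agree
  have hstep : ∀ m : ℕ, (hm1 : 1 ≤ m) → (hm : m + 1 < n) →
      d ⟨m + 1, by omega⟩ = d ⟨m, by omega⟩ := by
    intro m hm1 hm
    have h := hrow ⟨m, by omega⟩ hm
    simp only [Ff, Fin.val_mk] at h
    rw [if_neg (by omega), dif_pos hm, if_neg (by omega), dif_pos hm] at h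
    simp only [hd]
    omega
  have hconst : ∀ k : Fin n, (k : ℕ) ≠ 0 → d k = d ⟨1, hn1⟩ := by
    have key : ∀ m : ℕ, 1 ≤ m → (hm : m < n) → d ⟨m, hm⟩ = d ⟨1, hn1⟩ := by
      intro m
      induction m with
      | zero => intro h; omega
      | succ p ih =>
        intro _ hm
        rcases Nat.eq_or_lt_of_le (Nat.one_le_iff_ne_zero.mpr (by omega) : 1 ≤ p + 1) with h | h
        · have hp0 : p = 0 := by omega
          subst hp0
          rfl
        · have hp1 : 1 ≤ p := by omega
          rw [hstep p hp1 hm]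
          exact ih hp1 (by omega)
    intro k hk
    have := key (k : ℕ) (by omega) k.isLt
    simpa using this
  -- compute the sum
  have hzero : Fin.mk 0 hn0 ∈ (Finset.univ : Finset (Fin n)) := Finset.mem_univ _
  have hsum2 : ∑ k, d k = d ⟨0, hn0⟩ + (n - 1 : ℕ) * d ⟨1, hn1⟩ := by
    rw [← Finset.add_sum_erase _ _ hzero]
    congr 1
    rw [Finset.sum_congr rfl (fun k hk => hconst k (by
      have := Finset.ne_of_mem_erase hk
      simpa [Fin.ext_iff] using this))]
    rw [Finset.sum_const, Finset.card_erase_of_mem hzero, Finset.card_univ, Fintype.card_fin]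
    simp [nsmul_eq_mul]
  have hdj : d j = 0 := by simp [hd, hj]
  have hd1 : d ⟨1, hn1⟩ = 0 ∧ d ⟨0, hn0⟩ = 0 := by
    by_cases hj0 : (j : ℕ) = 0
    · have : d ⟨0, hn0⟩ = 0 := by
        have : j = ⟨0, hn0⟩ := by simp [Fin.ext_iff, hj0]
        rwa [this] at hdj
      constructor
      · have hne : ((n - 1 : ℕ) : ℤ) ≠ 0 := by
          simp only [ne_eq, Nat.cast_eq_zero]; omega
        have h2 : ((n - 1 : ℕ) : ℤ) * d ⟨1, hn1⟩ = 0 := by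
          rw [hsum2, this] at hsum; linarith
        rcases mul_eq_zero.mp h2 with h | h
        · exact absurd h hne
        · exact h
      · exact this
    · have h1 : d ⟨1, hn1⟩ = 0 := by rw [← hconst j hj0]; exact hdj
      constructor
      · exact h1
      · rw [hsum2, h1] at hsum; linarith
  have : ∀ k : Fin n, d k = 0 := by
    intro k
    by_cases hk : (k : ℕ) = 0
    · have : k = ⟨0, hn0⟩ := by simp [Fin.ext_iff, hk]
      rw [this]; exact hd1.2
    · rw [hconst k hk]; exact hd1.1
  funext k
  have := this k
  simp only [hd, sub_eq_zero] at this
  exact_mod_cast this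

theorem Ff_zero {n : ℕ} (ε : ℤ) : Ff n ε 0 = 0 := by
  funext k
  simp only [Ff, Pi.zero_apply]
  split_ifs <;> simp

/-- The candidate orders are monomial orders. -/
theorem Ff_monomial {n : ℕ} (hn : 4 ≤ n) (ε : ℤ) (hε : ε ≠ 0) :
    IsMonomialOrder (fun a b : Fin n → ℕ => lexLt (Ff n ε a) (Ff n ε b)) := by
  have hn0 : 0 < n := by omega
  have hinj : ∀ a b : Fin n → ℕ, Ff n ε a = Ff n ε b → a = b := by
    intro a b h
    have hlast : a ⟨0, hn0⟩ = b ⟨0, hn0⟩ := by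
      have h2 := congrFun h ⟨n - 1, by omega⟩
      simp only [Ff, Fin.val_mk] at h2
      rw [if_neg (by omega), dif_neg (by omega), if_neg (by omega), dif_neg (by omega)] at h2
      have := mul_left_cancel₀ hε h2
      exact_mod_cast this
    exact Ff_core hn (fun k _ => congrFun h k) _ hlast
  refine ⟨?_, ?_, ?_⟩
  · exact
      { trichotomous := by
          intro a b hab hba
          by_contra h
          · rcases lexLt_trichot' (fun he => h (hinj a b he)) with h' | h'
            · exact hab h'
            · exact hba h'
        irrefl := fun a => lexLt_irrefl' _
        trans := fun a b c => lexLt_trans' }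
  · intro a ha
    rw [Ff_zero]
    refine ⟨⟨0, hn0⟩, ?_, ?_⟩
    · simp only [Ff, Fin.val_mk, if_pos rfl, Pi.zero_apply]
      have : ∃ i, a i ≠ 0 := Function.ne_iff.mp ha
      obtain ⟨i, hi⟩ := this
      refine Finset.sum_pos' (fun i _ => by positivity) ⟨i, Finset.mem_univ _, by positivity⟩
    · intro j hj
      exact absurd hj (by simp [Fin.lt_def])
  · intro a b c h
    rw [Ff_add, Ff_add]
    exact lexLt_add h

theorem Ff_agree {n : ℕ} (hn : 4 ≤ n) (ε ε' : ℤ) {a b : Fin n → ℕ} (i : Fin n)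
    (hai : a i = 0) (hbi : b i = 0) (h : lexLt (Ff n ε a) (Ff n ε b)) :
    lexLt (Ff n ε' a) (Ff n ε' b) := by
  obtain ⟨j, hj, hpre⟩ := h
  by_cases hjn : (j : ℕ) + 1 < n
  · refine ⟨j, ?_, ?_⟩
    · rw [← Ff_indep ε ε' a j hjn, ← Ff_indep ε ε' b j hjn]; exact hj
    · intro j' hj'
      have hj'n : (j' : ℕ) + 1 < n := by
        have : (j' : ℕ) < (j : ℕ) := hj'
        omega
      rw [← Ff_indep ε ε' a j' hj'n, ← Ff_indep ε ε' b j' hj'n]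
      exact hpre j' hj'
  · -- j is the last row; then all other rows agree and a = b, contradiction
    have hjval : (j : ℕ) = n - 1 := by have := j.isLt; omega
    have heq : a = b := by
      refine Ff_core hn (ε := ε) (ε' := ε) (fun k hk => ?_) i (by rw [hai, hbi])
      apply hpre
      rw [Fin.lt_def, hjval]
      omega
    rw [heq] at hj
    exact absurd hj (lt_irrefl _)

/-- For every `n ≥ 4` there exist two distinct monomial orders on `ℕⁿ` whose
induced orderings agree for every `i`. -/
theorem stmt_16 {n : ℕ} (hn : 4 ≤ n) :
    ∃ r s : (Fin n → ℕ) → (Fin n → ℕ) → Prop,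
      IsMonomialOrder r ∧ IsMonomialOrder s ∧ r ≠ s ∧
      ∀ i : Fin n, ∀ a b : Fin n → ℕ, a i = 0 → b i = 0 → (r a b ↔ s a b) := by
  have hn0 : 0 < n := by omega
  refine ⟨fun a b => lexLt (Ff n 1 a) (Ff n 1 b),
          fun a b => lexLt (Ff n (-1) a) (Ff n (-1) b),
          Ff_monomial hn 1 one_ne_zero, Ff_monomial hn (-1) (by norm_num), ?_, ?_⟩
  · -- r ≠ s : witness pair
    intro h
    set a : Fin n → ℕ := fun k => if (k : ℕ) = 0 then n - 1 else 0 with ha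
    set b : Fin n → ℕ := fun k => if (k : ℕ) = 0 then 0 else 1 with hb
    -- computations of the rows
    have hsa : ∑ i, ((a i : ℤ)) = (n : ℤ) - 1 := by
      have : ∀ i : Fin n, (a i : ℤ) = if i = ⟨0, hn0⟩ then ((n : ℤ) - 1) else 0 := by
        intro i
        simp only [ha]
        by_cases hi : (i : ℕ) = 0
        · rw [if_pos hi, if_pos (by simp [Fin.ext_iff, hi])]
          omega
        · rw [if_neg hi, if_neg (by simp [Fin.ext_iff, hi])]; simp
      rw [Finset.sum_congr rfl (fun i _ => this i)]
      simp
    have hsb : ∑ i, ((b i : ℤ)) = (n : ℤ) - 1 := by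
      have : ∀ i : Fin n, (b i : ℤ) = 1 - (if i = ⟨0, hn0⟩ then (1 : ℤ) else 0) := by
        intro i
        simp only [hb]
        by_cases hi : (i : ℕ) = 0
        · rw [if_pos hi, if_pos (by simp [Fin.ext_iff, hi])]; simp
        · rw [if_neg hi, if_neg (by simp [Fin.ext_iff, hi])]; simp
      rw [Finset.sum_congr rfl (fun i _ => this i), Finset.sum_sub_distrib]
      simp
    have hrows : ∀ (ε : ℤ) (k : Fin n), (k : ℕ) + 1 < n → Ff n ε a k = Ff n ε b k := by
      intro ε k hk
      simp only [Ff]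
      by_cases h0 : (k : ℕ) = 0
      · rw [if_pos h0, if_pos h0, hsa, hsb]
      · rw [if_neg h0, if_neg h0, dif_pos hk, dif_pos hk]
        have hak : a k = 0 := by simp [ha, h0]
        have hak1 : a ⟨(k : ℕ) + 1, hk⟩ = 0 := by simp [ha]
        have hbk : b k = 1 := by simp [hb, h0]
        have hbk1 : b ⟨(k : ℕ) + 1, hk⟩ = 1 := by simp [hb]
        rw [hak, hak1, hbk, hbk1]
        simp
    -- the last row
    have hlast : ∀ ε : ℤ, Ff n ε a ⟨n - 1, by omega⟩ = ε * ((n : ℤ) - 1) ∧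
        Ff n ε b ⟨n - 1, by omega⟩ = 0 := by
      intro ε
      constructor
      · simp only [Ff, Fin.val_mk]
        rw [if_neg (by omega), dif_neg (by omega)]
        simp only [ha, Fin.val_mk, if_pos rfl]
        congr 1
        omega
      · simp only [Ff, Fin.val_mk]
        rw [if_neg (by omega), dif_neg (by omega)]
        simp [hb]
    -- s a b holds
    have hs : lexLt (Ff n (-1) a) (Ff n (-1) b) := by
      refine ⟨⟨n - 1, by omega⟩, ?_, ?_⟩
      · rw [(hlast (-1)).1, (hlast (-1)).2]
        have : (1 : ℤ) ≤ (n : ℤ) - 1 := by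
          have : (4 : ℤ) ≤ (n : ℤ) := by exact_mod_cast hn
          linarith
        nlinarith
      · intro j hj
        apply hrows
        have : (j : ℕ) < n - 1 := hj
        omega
    -- r a b does not hold: instead r b a holds
    have hr : lexLt (Ff n 1 b) (Ff n 1 a) := by
      refine ⟨⟨n - 1, by omega⟩, ?_, ?_⟩
      · rw [(hlast 1).1, (hlast 1).2]
        have : (4 : ℤ) ≤ (n : ℤ) := by exact_mod_cast hn
        linarith
      · intro j hj
        refine (hrows 1 j ?_).symm
        have : (j : ℕ) < n - 1 := hj
        omega
    have hsr : lexLt (Ff n 1 a) (Ff n 1 b) := by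
      have := congrFun (congrFun h a) b
      rw [this]
      exact hs
    exact lexLt_irrefl' _ (lexLt_trans' hsr hr)
  · intro i a b hai hbi
    exact ⟨Ff_agree hn 1 (-1) i hai hbi, Ff_agree hn (-1) 1 i hai hbi⟩
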